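/- Let N ≥ 3. In the wheel poset H_N, for each i ∈ [N], the element r_{i+1,i-1} (indices mod N, representatives in [N]) is below r_{j,j} if and only if j ≠ i. Consequently, the subposet induced by {r_{i+1,i-1} : i ∈ [N]} ∪ {r_{j,j} : j ∈ [N]} is isomorphic to the standard example S_N. -/
import Mathlib

/-- The cyclic interval ⟨i,j⟩ inside {1,…,N}: elements k with (k−i) mod N ≤ (j−i) mod N. -/
def cyc (N i j : ℕ) : Finset ℕ :=
  (Finset.Icc 1 N).filter (fun k => (k + N - i) % N ≤ (j + N - i) % N)

/-- Index pairs (i,j) of wheel elements: i,j ∈ [N] with j+1 ≢ i (mod N). -/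
def wheelPairs (N : ℕ) : Finset (ℕ × ℕ) :=
  (Finset.Icc 1 N ×ˢ Finset.Icc 1 N).filter (fun p => (p.2 + 1) % N ≠ p.1 % N)

/-- Ground set of the wheel H_N: the elements r_{i,j} (as `some (i,j)`) plus `none` = min. -/
def wheelGround (N : ℕ) : Finset (Option (ℕ × ℕ)) :=
  insert none ((wheelPairs N).image some)

/-- Order of the wheel: min below all, r_{i,j} ≤ r_{i',j'} iff ⟨i',j'⟩ ⊆ ⟨i,j⟩. -/
def wheelLe (N : ℕ) : Option (ℕ × ℕ) → Option (ℕ × ℕ) → Prop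
  | none, _ => True
  | some _, none => False
  | some p, some q => cyc N q.1 q.2 ⊆ cyc N p.1 p.2

/-- The (reflexive) order of the standard example S_k on Fin k ⊕ Fin k:
`inl i` is a_i, `inr j` is b_j, with a_i ≤ b_j iff i ≠ j. -/
def stdLe (k : ℕ) : (Fin k ⊕ Fin k) → (Fin k ⊕ Fin k) → Prop
  | .inl i, .inl j => i = j
  | .inl i, .inr j => i ≠ j
  | .inr _, .inl _ => False
  | .inr i, .inr j => i = j

/-- `r` has a realizer of size `n`: n linear orders whose intersection is `r`. -/
def realizes {α : Type*} (r : α → α → Prop) (n : ℕ) : Prop :=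
  ∃ L : Fin n → α → α → Prop, (∀ m, IsLinearOrder α (L m)) ∧
    ∀ a b, r a b ↔ ∀ m, L m a b

/-- Order dimension of the relation `r`. -/
noncomputable def odim {α : Type*} (r : α → α → Prop) : ℕ :=
  sInf {n | realizes r n}

lemma modgen (N x : ℕ) (hN : 1 ≤ N) (hx : x < 2 * N) :
    x % N = if x < N then x else x - N := by
  split_ifs with h
  · exact Nat.mod_eq_of_lt h
  · have hx' : x = (x - N) + N := by omega
    nth_rewrite 1 [hx']
    rw [Nat.add_mod_right, Nat.mod_eq_of_lt (by omega)]

lemma mem_cyc (N i j k : ℕ) :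
    k ∈ cyc N i j ↔ (1 ≤ k ∧ k ≤ N) ∧ (k + N - i) % N ≤ (j + N - i) % N := by
  simp [cyc, Finset.mem_filter, Finset.mem_Icc, and_assoc]

lemma cyc_self (N j : ℕ) (hN : 1 ≤ N) (hj1 : 1 ≤ j) (hj2 : j ≤ N) :
    cyc N j j = {j} := by
  ext k
  simp only [mem_cyc, Finset.mem_singleton]
  constructor
  · rintro ⟨⟨hk1, hk2⟩, h⟩
    rw [modgen N _ hN (by omega), modgen N _ hN (by omega)] at h
    split_ifs at h <;> omega
  · rintro rfl
    exact ⟨⟨hj1, hj2⟩, le_refl _⟩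

lemma key (N i k : ℕ) (hN : 3 ≤ N) (hi1 : 1 ≤ i) (hi2 : i ≤ N)
    (hk1 : 1 ≤ k) (hk2 : k ≤ N) :
    k ∈ cyc N (i % N + 1) ((i + N - 2) % N + 1) ↔ k ≠ i := by
  rw [mem_cyc]
  have h1 : i % N = if i < N then i else i - N := modgen N i (by omega) (by omega)
  have h2 : (i + N - 2) % N = if i + N - 2 < N then i + N - 2 else i + N - 2 - N :=
    modgen N _ (by omega) (by omega)
  rw [h1, h2]
  simp only [hk1, hk2, and_self, true_and]
  split_ifs <;>
    (rw [modgen N _ (by omega) (by omega), modgen N _ (by omega) (by omega)];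
     split_ifs <;> omega)

lemma long_mem (N i : ℕ) (hN : 3 ≤ N) (hi1 : 1 ≤ i) (hi2 : i ≤ N) :
    some (i % N + 1, (i + N - 2) % N + 1) ∈ wheelGround N := by
  have h1 : i % N = if i < N then i else i - N := modgen N i (by omega) (by omega)
  have h2 : (i + N - 2) % N = if i + N - 2 < N then i + N - 2 else i + N - 2 - N :=
    modgen N _ (by omega) (by omega)
  simp only [wheelGround, Finset.mem_insert, Finset.mem_image]
  right
  refine ⟨_, ?_, rfl⟩
  simp only [wheelPairs, Finset.mem_filter, Finset.mem_product, Finset.mem_Icc]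
  rw [h1, h2]
  split_ifs <;>
    (refine ⟨⟨⟨by omega, by omega⟩, by omega, by omega⟩, ?_⟩;
     rw [modgen N _ (by omega) (by omega), modgen N _ (by omega) (by omega)];
     split_ifs <;> omega)

lemma diag_mem (N j : ℕ) (hN : 3 ≤ N) (hj1 : 1 ≤ j) (hj2 : j ≤ N) :
    some (j, j) ∈ wheelGround N := by
  simp only [wheelGround, Finset.mem_insert, Finset.mem_image]
  right
  refine ⟨_, ?_, rfl⟩
  simp only [wheelPairs, Finset.mem_filter, Finset.mem_product, Finset.mem_Icc]
  refine ⟨⟨⟨hj1, hj2⟩, hj1, hj2⟩, ?_⟩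
  rw [modgen N _ (by omega) (by omega), modgen N _ (by omega) (by omega)]
  split_ifs <;> omega

theorem wheel_contains_standard_example (N : ℕ) (hN : 3 ≤ N) :
    (∀ i ∈ Finset.Icc 1 N, ∀ j ∈ Finset.Icc 1 N,
      (wheelLe N (some (i % N + 1, (i + N - 2) % N + 1)) (some (j, j)) ↔ j ≠ i)) ∧
    (∃ f : (Fin N ⊕ Fin N) → Option (ℕ × ℕ),
      (∀ x, f x ∈ wheelGround N) ∧ Function.Injective f ∧
      ∀ x y, stdLe N x y ↔ wheelLe N (f x) (f y)) := by
  constructor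
  · intro i hi j hj
    rw [Finset.mem_Icc] at hi hj
    show cyc N j j ⊆ _ ↔ _
    rw [cyc_self N j (by omega) hj.1 hj.2, Finset.singleton_subset_iff]
    exact key N i j hN hi.1 hi.2 hj.1 hj.2
  · refine ⟨Sum.elim
      (fun i : Fin N => some ((i.1 + 1) % N + 1, ((i.1 + 1) + N - 2) % N + 1))
      (fun j : Fin N => some (j.1 + 1, j.1 + 1)), ?_, ?_, ?_⟩
    · rintro (i | j)
      · exact long_mem N (i.1 + 1) hN (by omega) (by omega)
      · exact diag_mem N (j.1 + 1) hN (by omega) (by omega)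
    · rintro (i | j) (i' | j') h <;>
        simp only [Sum.elim_inl, Sum.elim_inr, Option.some.injEq, Prod.mk.injEq] at h
      · have hi := i.isLt; have hi' := i'.isLt
        have h' := h.1
        have e : (i.1 + 1) % N = (i'.1 + 1) % N := by omega
        rw [modgen N _ (by omega) (by omega), modgen N _ (by omega) (by omega)] at e
        have : i.1 = i'.1 := by split_ifs at e <;> omega
        exact congrArg Sum.inl (Fin.ext this)
      · -- inl = inr : contradiction
        have hi := i.isLt; have hj' := j'.isLt
        exfalso
        have e1 : (i.1 + 1) % N + 1 = j'.1 + 1 := h.1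
        have e2 : ((i.1 + 1) + N - 2) % N + 1 = j'.1 + 1 := h.2
        have e : (i.1 + 1) % N = ((i.1 + 1) + N - 2) % N := by omega
        rw [modgen N _ (by omega) (by omega), modgen N _ (by omega) (by omega)] at e
        split_ifs at e <;> omega
      · have hi' := i'.isLt; have hj := j.isLt
        exfalso
        have e1 : (i'.1 + 1) % N + 1 = j.1 + 1 := h.1.symm
        have e2 : ((i'.1 + 1) + N - 2) % N + 1 = j.1 + 1 := h.2.symm
        have e : (i'.1 + 1) % N = ((i'.1 + 1) + N - 2) % N := by omega
        rw [modgen N _ (by omega) (by omega), modgen N _ (by omega) (by omega)] at e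
        split_ifs at e <;> omega
      · have : j.1 = j'.1 := by omega
        exact congrArg Sum.inr (Fin.ext this)
    · rintro (i | u) (j | v)
      · -- inl inl : i = j ↔ subset of long intervals
        have hi := i.isLt; have hj := j.isLt
        show i = j ↔ cyc N _ _ ⊆ cyc N _ _
        constructor
        · rintro rfl; exact subset_rfl
        · intro hsub
          by_contra hne
          have hne' : (i.1 + 1 : ℕ) ≠ j.1 + 1 := by
            simp only [Fin.ext_iff] at hne; omega
          have hmem : (i.1 + 1) ∈ cyc N ((j.1 + 1) % N + 1) (((j.1 + 1) + N - 2) % N + 1) :=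
            (key N (j.1 + 1) (i.1 + 1) hN (by omega) (by omega) (by omega) (by omega)).2 hne'
          have := (key N (i.1 + 1) (i.1 + 1) hN (by omega) (by omega) (by omega) (by omega)).1
            (hsub hmem)
          exact this rfl
      · -- inl inr : i ≠ v ↔ {v'} ⊆ long(i')
        have hi := i.isLt; have hv := v.isLt
        show i ≠ v ↔ cyc N (v.1 + 1) (v.1 + 1) ⊆ _
        rw [cyc_self N (v.1 + 1) (by omega) (by omega) (by omega),
          Finset.singleton_subset_iff,
          key N (i.1 + 1) (v.1 + 1) hN (by omega) (by omega) (by omega) (by omega)]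
        simp only [Fin.ext_iff, ne_eq]
        omega
      · -- inr inl : False ↔ long(j') ⊆ {u'}
        have hu := u.isLt; have hj := j.isLt
        show False ↔ cyc N _ _ ⊆ cyc N (u.1 + 1) (u.1 + 1)
        rw [cyc_self N (u.1 + 1) (by omega) (by omega) (by omega)]
        constructor
        · exact fun h => h.elim
        · intro hsub
          obtain ⟨k1, k2, hk⟩ : ∃ k1 k2, k1 ≠ k2 ∧ 1 ≤ k1 ∧ k1 ≤ N ∧ k1 ≠ j.1 + 1 ∧
              1 ≤ k2 ∧ k2 ≤ N ∧ k2 ≠ j.1 + 1 := by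
            refine ⟨if j.1 + 1 = 1 then 2 else 1, if j.1 + 1 = 3 then 2 else 3, ?_⟩
            split_ifs <;> omega
          have m1 : k1 ∈ cyc N ((j.1 + 1) % N + 1) (((j.1 + 1) + N - 2) % N + 1) :=
            (key N (j.1 + 1) k1 hN (by omega) (by omega) hk.2.1 hk.2.2.1).2 hk.2.2.2.1
          have m2 : k2 ∈ cyc N ((j.1 + 1) % N + 1) (((j.1 + 1) + N - 2) % N + 1) :=
            (key N (j.1 + 1) k2 hN (by omega) (by omega) hk.2.2.2.2.1 hk.2.2.2.2.2.1).2
              hk.2.2.2.2.2.2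
          have e1 := Finset.mem_singleton.1 (hsub m1)
          have e2 := Finset.mem_singleton.1 (hsub m2)
          omega
      · -- inr inr
        show u = v ↔ cyc N (v.1 + 1) (v.1 + 1) ⊆ cyc N (u.1 + 1) (u.1 + 1)
        have hu := u.isLt; have hv := v.isLt
        rw [cyc_self N (v.1 + 1) (by omega) (by omega) (by omega),
          cyc_self N (u.1 + 1) (by omega) (by omega) (by omega),
          Finset.singleton_subset_iff, Finset.mem_singleton]
        simp only [Fin.ext_iff]
        omega
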